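/- Let Ω ⊆ ℝⁿ be open, let Φ : Ω → ℝᵐ be locally Lipschitz continuous and twice semidifferentiable near a point w̄ ∈ Ω, and let f be a real-valued function that is differentiable on a neighborhood of z̄ := Φ(w̄) whose gradient map F := ∇f is directionally differentiable at z̄ and satisfies the SC¹ limit: lim_{d→0} [ f(z̄+d) − f(z̄) − F(z̄)ᵀd − ½ dᵀF'(z̄;d) ] / ‖d‖² = 0. Then the composite function φ := f ∘ Φ is twice semidifferentiable at w̄ and, for every v ∈ ℝⁿ, φ⁽²⁾(w̄;v) = Φ'(w̄;v)ᵀ F'(Φ(w̄); Φ'(w̄;v)) + F(Φ(w̄))ᵀ Φ⁽²⁾(w̄;v). -/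

import Mathlib

open Filter Topology Set

noncomputable section

/-- Euclidean norm on `Fin n → ℝ`. -/
def n2 {n : ℕ} (v : Fin n → ℝ) : ℝ := Real.sqrt (∑ i, v i ^ 2)

/-- First-order semidifferentiability limit for a scalar function. -/
def SemidiffLim {n : ℕ} (f : (Fin n → ℝ) → ℝ) (x v : Fin n → ℝ) (d : ℝ) : Prop :=
  Tendsto (fun p : (Fin n → ℝ) × ℝ => (f (x + p.2 • p.1) - f x) / p.2)
    ((𝓝 v) ×ˢ (𝓝[>] 0)) (𝓝 d)

/-- Second-order semidifferentiability limit for a scalar function, relative to a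
first-order directional derivative function `f'`. -/
def Semidiff2Lim {n : ℕ} (f : (Fin n → ℝ) → ℝ) (x : Fin n → ℝ)
    (f' : (Fin n → ℝ) → ℝ) (w : Fin n → ℝ) (d : ℝ) : Prop :=
  Tendsto (fun p : (Fin n → ℝ) × ℝ =>
      2 * (f (x + p.2 • p.1) - f x - p.2 * f' p.1) / p.2 ^ 2)
    ((𝓝 w) ×ˢ (𝓝[>] 0)) (𝓝 d)

/-- First-order semidifferentiability limit for a vector function (componentwise). -/
def VSemidiffLim {n m : ℕ} (Φ : (Fin n → ℝ) → (Fin m → ℝ)) (x v : Fin n → ℝ)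
    (d : Fin m → ℝ) : Prop :=
  Tendsto (fun p : (Fin n → ℝ) × ℝ => (p.2)⁻¹ • (Φ (x + p.2 • p.1) - Φ x))
    ((𝓝 v) ×ˢ (𝓝[>] 0)) (𝓝 d)

/-- Second-order semidifferentiability limit for a vector function. -/
def VSemidiff2Lim {n m : ℕ} (Φ : (Fin n → ℝ) → (Fin m → ℝ)) (x : Fin n → ℝ)
    (Φ' : (Fin n → ℝ) → (Fin m → ℝ)) (w : Fin n → ℝ) (d : Fin m → ℝ) : Prop :=
  Tendsto (fun p : (Fin n → ℝ) × ℝ =>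
      (2 / p.2 ^ 2) • (Φ (x + p.2 • p.1) - Φ x - p.2 • Φ' p.1))
    ((𝓝 w) ×ˢ (𝓝[>] 0)) (𝓝 d)

/-- A vector function is twice semidifferentiable at `x`. -/
def VTwiceSemidiff {n m : ℕ} (Φ : (Fin n → ℝ) → (Fin m → ℝ)) (x : Fin n → ℝ) : Prop :=
  ∃ Φ' : (Fin n → ℝ) → (Fin m → ℝ),
    (∀ v, VSemidiffLim Φ x v (Φ' v)) ∧ ∀ w, ∃ d, VSemidiff2Lim Φ x Φ' w d

/-- One-sided directional derivative of a vector function: `Φ'(x;v) = d`. -/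
def VHasDirDeriv {n m : ℕ} (Φ : (Fin n → ℝ) → (Fin m → ℝ)) (x v : Fin n → ℝ)
    (d : Fin m → ℝ) : Prop :=
  Tendsto (fun τ : ℝ => τ⁻¹ • (Φ (x + τ • v) - Φ x)) (𝓝[>] 0) (𝓝 d)

/-- The continuous linear map `v ↦ gᵀv` associated with a gradient vector `g`. -/
def gradCLM {m : ℕ} (g : Fin m → ℝ) : (Fin m → ℝ) →L[ℝ] ℝ :=
  ∑ i, g i • ContinuousLinearMap.proj i

/- ### Auxiliary lemmas -/

lemma gradCLM_apply {m : ℕ} (g x : Fin m → ℝ) : gradCLM g x = ∑ i, g i * x i := by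
  simp [gradCLM, ContinuousLinearMap.sum_apply]

lemma n2_sq {m : ℕ} (d : Fin m → ℝ) : n2 d ^ 2 = ∑ i, d i ^ 2 := by
  simp [n2, Real.sq_sqrt (Finset.sum_nonneg fun i _ => sq_nonneg _)]

lemma sum_sq_pos {m : ℕ} {d : Fin m → ℝ} (hd : d ≠ 0) : 0 < ∑ i, d i ^ 2 := by
  obtain ⟨i, hi⟩ : ∃ i, d i ≠ 0 := by
    by_contra h; push_neg at h; exact hd (funext h)
  have h1 : (0:ℝ) < d i ^ 2 := by positivity
  have h2 := Finset.single_le_sum (f := fun i => d i ^ 2)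
    (fun j _ => sq_nonneg _) (Finset.mem_univ i)
  have h2' : d i ^ 2 ≤ ∑ j, d j ^ 2 := h2
  linarith

lemma sum_sq_smul {m : ℕ} (c : ℝ) (d : Fin m → ℝ) :
    ∑ i, (c • d) i ^ 2 = c ^ 2 * ∑ i, d i ^ 2 := by
  simp [Finset.mul_sum, mul_pow]

lemma continuous_sum_sq {m : ℕ} : Continuous fun d : Fin m → ℝ => ∑ i, d i ^ 2 :=
  continuous_finset_sum _ fun i _ => (continuous_apply i).pow 2

lemma n2_le {m : ℕ} (d : Fin m → ℝ) : n2 d ≤ Real.sqrt m * ‖d‖ := by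
  have hsum : (∑ i, d i ^ 2) ≤ (m : ℝ) * ‖d‖ ^ 2 := by
    calc (∑ i, d i ^ 2) ≤ ∑ _i : Fin m, ‖d‖ ^ 2 := by
          apply Finset.sum_le_sum
          intro i _
          have h1 : |d i| ≤ ‖d‖ := by
            simpa [Real.norm_eq_abs] using norm_le_pi_norm d i
          calc d i ^ 2 = |d i| ^ 2 := (sq_abs _).symm
            _ ≤ ‖d‖ ^ 2 := pow_le_pow_left₀ (abs_nonneg _) h1 2
      _ = (m : ℝ) * ‖d‖ ^ 2 := by simp [Finset.sum_const, Finset.card_univ, nsmul_eq_mul]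
  calc n2 d ≤ Real.sqrt ((m : ℝ) * ‖d‖ ^ 2) := Real.sqrt_le_sqrt hsum
    _ = Real.sqrt m * ‖d‖ := by
        rw [Real.sqrt_mul (Nat.cast_nonneg m), Real.sqrt_sq (norm_nonneg d)]

lemma mul_pos_tendsto (t : ℝ) (ht : 0 < t) :
    Tendsto (fun τ : ℝ => t * τ) (𝓝[>] (0:ℝ)) (𝓝[>] (0:ℝ)) := by
  apply tendsto_nhdsWithin_of_tendsto_nhds_of_eventually_within
  · have : Tendsto (fun τ : ℝ => t * τ) (𝓝 0) (𝓝 (t * 0)) :=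
      (continuous_const.mul continuous_id).tendsto 0
    simpa using this.mono_left nhdsWithin_le_nhds
  · filter_upwards [eventually_mem_nhdsWithin] with τ hτ
    exact mul_pos ht hτ

lemma F1_homog {m : ℕ} {F F1 : (Fin m → ℝ) → (Fin m → ℝ)} {z : Fin m → ℝ}
    (hF1 : ∀ u, VHasDirDeriv F z u (F1 u)) {t : ℝ} (ht : 0 < t) (x : Fin m → ℝ) :
    F1 (t • x) = t • F1 x := by
  have h1 := (hF1 x).comp (mul_pos_tendsto t ht)
  have h2 := h1.const_smul t
  have h3 := hF1 (t • x)
  refine tendsto_nhds_unique h3 (h2.congr' ?_)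
  filter_upwards [eventually_mem_nhdsWithin] with τ (hτ : 0 < τ)
  show t • ((t * τ)⁻¹ • (F (z + (t * τ) • x) - F z)) = τ⁻¹ • (F (z + τ • t • x) - F z)
  rw [smul_smul, smul_smul, mul_comm τ t]
  congr 1
  field_simp

lemma q_continuous {m : ℕ} (q Δ : (Fin m → ℝ) → ℝ)
    (hqh : ∀ t : ℝ, 0 < t → ∀ x, q (t • x) = t ^ 2 * q x)
    (δc : ℝ) (hδc : 0 < δc) (hΔ : ∀ d : Fin m → ℝ, ‖d‖ < δc → ContinuousAt Δ d)
    (hEst : ∀ ε > (0:ℝ), ∃ δ > (0:ℝ), ∀ d : Fin m → ℝ, ‖d‖ < δ →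
      |Δ d - (1/2) * q d| ≤ ε * ∑ i, d i ^ 2) :
    Continuous q := by
  rw [continuous_iff_continuousAt]
  intro u
  rw [ContinuousAt, Metric.tendsto_nhds]
  intro ε hε
  set M : ℝ := (∑ i, u i ^ 2) + 1 with hM
  have hM0 : 0 < M := by positivity
  have hε₁ : (0:ℝ) < ε / (16 * M) := by positivity
  obtain ⟨δ, hδ, hest⟩ := hEst _ hε₁
  set s : ℝ := min (min 1 (δ / (‖u‖ + 2))) (δc / (‖u‖ + 2)) with hs
  have hs0 : 0 < s := by
    apply lt_min (lt_min one_pos _) <;> positivity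
  have hs2 : 0 < s ^ 2 := by positivity
  have hsx : ∀ x : Fin m → ℝ, ‖x‖ < ‖u‖ + 1 → ‖s • x‖ < δ := by
    intro x hx
    rw [norm_smul, Real.norm_eq_abs, abs_of_pos hs0]
    have h1 : s ≤ δ / (‖u‖ + 2) := le_trans (min_le_left _ _) (min_le_right _ _)
    have h2 : (0:ℝ) < ‖u‖ + 2 := by positivity
    calc s * ‖x‖ ≤ (δ / (‖u‖ + 2)) * ‖x‖ := by
          apply mul_le_mul_of_nonneg_right h1 (norm_nonneg _)
      _ < (δ / (‖u‖ + 2)) * (‖u‖ + 2) := by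
          apply mul_lt_mul_of_pos_left _ (by positivity)
          linarith
      _ = δ := by field_simp
  have hsuc : ‖s • u‖ < δc := by
    rw [norm_smul, Real.norm_eq_abs, abs_of_pos hs0]
    have h1 : s ≤ δc / (‖u‖ + 2) := min_le_right _ _
    have h2 : (0:ℝ) < ‖u‖ + 2 := by positivity
    calc s * ‖u‖ ≤ (δc / (‖u‖ + 2)) * ‖u‖ := by
          apply mul_le_mul_of_nonneg_right h1 (norm_nonneg _)
      _ < (δc / (‖u‖ + 2)) * (‖u‖ + 2) := by
          apply mul_lt_mul_of_pos_left (by linarith) (by positivity)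
      _ = δc := by field_simp
  -- eventual facts
  have hev1 : ∀ᶠ x in 𝓝 u, ‖x‖ < ‖u‖ + 1 := by
    have : ContinuousAt (fun x : Fin m → ℝ => ‖x‖) u := continuous_norm.continuousAt
    exact this.eventually_lt continuousAt_const (by linarith)
  have hev2 : ∀ᶠ x in 𝓝 u, (∑ i, x i ^ 2) < M := by
    have : ContinuousAt (fun x : Fin m → ℝ => ∑ i, x i ^ 2) u :=
      continuous_sum_sq.continuousAt
    refine this.eventually_lt continuousAt_const ?_
    show (∑ i, u i ^ 2) < M
    rw [hM]; linarith
  have hcont : ContinuousAt (fun x : Fin m → ℝ => Δ (s • x)) u :=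
    (hΔ (s • u) hsuc).comp (continuous_const_smul s).continuousAt
  have hev3 : ∀ᶠ x in 𝓝 u, |Δ (s • x) - Δ (s • u)| < s ^ 2 * (ε / 8) := by
    have h := Metric.tendsto_nhds.mp hcont (s ^ 2 * (ε / 8)) (by positivity)
    simpa [Real.dist_eq] using h
  filter_upwards [hev1, hev2, hev3] with x hx1 hx2 hx3
  rw [Real.dist_eq]
  -- key estimates at s•x and s•u
  have hEx : |Δ (s • x) - (1/2) * q (s • x)| ≤ (ε / (16 * M)) * (s ^ 2 * ∑ i, x i ^ 2) := by
    have := hest (s • x) (hsx x hx1)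
    rwa [sum_sq_smul] at this
  have hEu : |Δ (s • u) - (1/2) * q (s • u)| ≤ (ε / (16 * M)) * (s ^ 2 * ∑ i, u i ^ 2) := by
    have := hest (s • u) (hsx u (by linarith [norm_nonneg u]))
    rwa [sum_sq_smul] at this
  have hqx := hqh s hs0 x
  have hqu := hqh s hs0 u
  -- combine
  have hid : s ^ 2 * (q x - q u) =
      2 * (Δ (s • x) - Δ (s • u)) - 2 * (Δ (s • x) - (1/2) * q (s • x))
        + 2 * (Δ (s • u) - (1/2) * q (s • u)) := by
    rw [hqx, hqu]; ring
  have hux : (∑ i, u i ^ 2) ≤ M := by simp [hM]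
  have hxx : (∑ i, x i ^ 2) ≤ M := le_of_lt hx2
  have hsum0x : (0:ℝ) ≤ ∑ i, x i ^ 2 := Finset.sum_nonneg fun i _ => sq_nonneg _
  have hbx : ε / (16 * M) * (s ^ 2 * ∑ i, x i ^ 2) ≤ s ^ 2 * (ε / 16) := by
    have h' : ε / (16 * M) * (s ^ 2 * ∑ i, x i ^ 2) ≤ ε / (16 * M) * (s ^ 2 * M) :=
      mul_le_mul_of_nonneg_left
        (mul_le_mul_of_nonneg_left hxx (le_of_lt hs2)) (le_of_lt hε₁)
    have h'' : ε / (16 * M) * (s ^ 2 * M) = s ^ 2 * (ε / 16) := by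
      field_simp
    linarith
  have hbu : ε / (16 * M) * (s ^ 2 * ∑ i, u i ^ 2) ≤ s ^ 2 * (ε / 16) := by
    have h' : ε / (16 * M) * (s ^ 2 * ∑ i, u i ^ 2) ≤ ε / (16 * M) * (s ^ 2 * M) :=
      mul_le_mul_of_nonneg_left
        (mul_le_mul_of_nonneg_left hux (le_of_lt hs2)) (le_of_lt hε₁)
    have h'' : ε / (16 * M) * (s ^ 2 * M) = s ^ 2 * (ε / 16) := by
      field_simp
    linarith
  have h1 := abs_le.mp hEx
  have h2 := abs_le.mp hEu
  have h3 := abs_lt.mp hx3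
  have hbound : |s ^ 2 * (q x - q u)| < s ^ 2 * ε := by
    rw [hid, abs_lt]
    constructor
    · linarith [h3.1, h1.2, h2.1, hbx, hbu]
    · linarith [h3.2, h1.1, h2.2, hbx, hbu]
  rw [abs_mul, abs_of_pos hs2] at hbound
  exact (mul_lt_mul_iff_right₀ hs2).mp hbound

theorem stmt0 {n m : ℕ} (Ω : Set (Fin n → ℝ)) (hΩ : IsOpen Ω)
    (wbar : Fin n → ℝ) (hw : wbar ∈ Ω)
    (Φ : (Fin n → ℝ) → (Fin m → ℝ))
    -- Φ is locally Lipschitz continuous and twice semidifferentiable near wbar, within Ω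
    (hnear : ∃ ε > (0:ℝ), {w | n2 (w - wbar) < ε} ⊆ Ω ∧
      (∃ K : ℝ, ∀ y z : Fin n → ℝ, n2 (y - wbar) < ε → n2 (z - wbar) < ε →
        n2 (Φ y - Φ z) ≤ K * n2 (y - z)) ∧
      (∀ w, n2 (w - wbar) < ε → VTwiceSemidiff Φ w))
    -- named first- and second-order semiderivatives of Φ at wbar
    (Φ1 Φ2 : (Fin n → ℝ) → (Fin m → ℝ))
    (hΦ1 : ∀ v, VSemidiffLim Φ wbar v (Φ1 v))
    (hΦ2 : ∀ v, VSemidiff2Lim Φ wbar Φ1 v (Φ2 v))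
    -- f is differentiable near Φ(wbar) with gradient map F
    (f : (Fin m → ℝ) → ℝ) (F : (Fin m → ℝ) → (Fin m → ℝ))
    (hdiff : ∃ δ > (0:ℝ), ∀ z : Fin m → ℝ, n2 (z - Φ wbar) < δ →
      HasFDerivAt f (gradCLM (F z)) z)
    -- F is directionally differentiable at Φ(wbar), with F'(Φ(wbar);·) = F1
    (F1 : (Fin m → ℝ) → (Fin m → ℝ))
    (hF1 : ∀ u, VHasDirDeriv F (Φ wbar) u (F1 u))
    -- the SC¹ limit at Φ(wbar)
    (hSC1 : Tendsto (fun d : Fin m → ℝ =>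
        (f (Φ wbar + d) - f (Φ wbar) - (∑ i, F (Φ wbar) i * d i)
          - (1/2) * ∑ i, d i * F1 d i) / (n2 d) ^ 2)
      (𝓝[≠] 0) (𝓝 0)) :
    -- conclusion: φ = f ∘ Φ is twice semidifferentiable at wbar with the chain-rule formula
    (∀ v, SemidiffLim (fun w => f (Φ w)) wbar v (∑ i, F (Φ wbar) i * Φ1 v i)) ∧
    (∀ v, Semidiff2Lim (fun w => f (Φ w)) wbar
        (fun u => ∑ i, F (Φ wbar) i * Φ1 u i) v
        ((∑ i, Φ1 v i * F1 (Φ1 v) i) + ∑ i, F (Φ wbar) i * Φ2 v i)) := by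
  clear hΩ hw hnear
  obtain ⟨δ₀, hδ₀, hdiff⟩ := hdiff
  set zb := Φ wbar with hzb
  set L : (Fin m → ℝ) →L[ℝ] ℝ := gradCLM (F zb) with hLdef
  set q : (Fin m → ℝ) → ℝ := fun x => ∑ i, x i * F1 x i with hqdef
  -- positive homogeneity of q
  have hqh : ∀ t : ℝ, 0 < t → ∀ x, q (t • x) = t ^ 2 * q x := by
    intro t ht x
    have hhom := F1_homog hF1 ht x
    calc q (t • x) = ∑ i, (t * x i) * (t * F1 x i) := by
          rw [hqdef]; simp only [hhom, Pi.smul_apply, smul_eq_mul]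
      _ = t ^ 2 * ∑ i, x i * F1 x i := by
          rw [Finset.mul_sum]; exact Finset.sum_congr rfl fun i _ => by ring
      _ = t ^ 2 * q x := rfl
  -- derivative at the base point
  have hfd : HasFDerivAt f L zb := hdiff zb (by simpa [n2] using hδ₀)
  -- key estimate from the SC¹ limit
  have hEst : ∀ ε > (0:ℝ), ∃ δ > (0:ℝ), ∀ d : Fin m → ℝ, ‖d‖ < δ →
      |f (zb + d) - f zb - L d - (1/2) * q d| ≤ ε * ∑ i, d i ^ 2 := by
    intro ε hε
    have h := Metric.tendsto_nhds.mp hSC1 ε hε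
    rw [eventually_nhdsWithin_iff, Metric.eventually_nhds_iff] at h
    obtain ⟨δ, hδ, h⟩ := h
    refine ⟨δ, hδ, fun d hd => ?_⟩
    have hLq : f (zb + d) - f zb - L d - (1/2) * q d
        = f (zb + d) - f zb - (∑ i, F zb i * d i) - (1/2) * ∑ i, d i * F1 d i := by
      rw [hLdef, gradCLM_apply, hqdef]
    by_cases hd0 : d = 0
    · subst hd0
      rw [hLq]; simp
    · have h1 := h (show dist d 0 < δ by rwa [dist_zero_right]) (by simpa using hd0)
      rw [Real.dist_eq, sub_zero, n2_sq, abs_div,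
        abs_of_pos (sum_sq_pos hd0)] at h1
      have h2 := (div_lt_iff₀ (sum_sq_pos hd0)).mp h1
      rw [hLq]
      exact le_of_lt h2
  -- continuity of the first-order remainder near 0
  have hδc : (0:ℝ) < δ₀ / (Real.sqrt m + 1) := by positivity
  have hΔc : ∀ d : Fin m → ℝ, ‖d‖ < δ₀ / (Real.sqrt m + 1) →
      ContinuousAt (fun d => f (zb + d) - f zb - L d) d := by
    intro d hd
    have hn : n2 ((zb + d) - zb) < δ₀ := by
      rw [add_sub_cancel_left]
      have h1 := n2_le d
      have hs : (0:ℝ) ≤ Real.sqrt m := Real.sqrt_nonneg _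
      have h2 : Real.sqrt m * ‖d‖ < δ₀ := by
        calc Real.sqrt m * ‖d‖ ≤ (Real.sqrt m + 1) * ‖d‖ := by
              nlinarith [norm_nonneg d]
          _ < (Real.sqrt m + 1) * (δ₀ / (Real.sqrt m + 1)) :=
              mul_lt_mul_of_pos_left hd (by positivity)
          _ = δ₀ := by field_simp
      linarith
    have hc : ContinuousAt f (zb + d) := (hdiff _ hn).continuousAt
    exact ((hc.comp ((continuous_const.add continuous_id).continuousAt)).sub
      continuousAt_const).sub (L.continuous.continuousAt)
  -- continuity of q
  have hqcont : Continuous q :=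
    q_continuous q (fun d => f (zb + d) - f zb - L d) hqh _ hδc hΔc hEst
  -- setup per direction
  have hsetup : ∀ v : Fin n → ℝ,
      (∀ᶠ p in (𝓝 v) ×ˢ (𝓝[>] (0:ℝ)), 0 < p.2) ∧
      Tendsto (fun p : (Fin n → ℝ) × ℝ => Φ (wbar + p.2 • p.1) - Φ wbar)
        ((𝓝 v) ×ˢ (𝓝[>] 0)) (𝓝 0) := by
    intro v
    have hτ : ∀ᶠ p in (𝓝 v) ×ˢ (𝓝[>] (0:ℝ)), 0 < p.2 :=
      Filter.Eventually.prod_inr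
        (eventually_mem_nhdsWithin.mono fun x hx => hx) (𝓝 v)
    refine ⟨hτ, ?_⟩
    have hsnd : Tendsto (fun p : (Fin n → ℝ) × ℝ => p.2)
        ((𝓝 v) ×ˢ (𝓝[>] 0)) (𝓝 0) :=
      tendsto_snd.mono_right nhdsWithin_le_nhds
    have h := hsnd.smul (hΦ1 v)
    rw [zero_smul] at h
    refine Filter.Tendsto.congr' ?_ h
    filter_upwards [hτ] with p hp
    rw [smul_smul, mul_inv_cancel₀ (ne_of_gt hp), one_smul]
  constructor
  · -- first-order semidifferentiability
    intro v
    obtain ⟨hτ, hd0⟩ := hsetup v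
    have hdv := hΦ1 v
    have hiso := hasFDerivAt_iff_isLittleO_nhds_zero.mp hfd
    have hA : Tendsto (fun p : (Fin n → ℝ) × ℝ =>
        L (p.2⁻¹ • (Φ (wbar + p.2 • p.1) - Φ wbar)))
        ((𝓝 v) ×ˢ (𝓝[>] 0)) (𝓝 (L (Φ1 v))) := (L.continuous.tendsto _).comp hdv
    have hB : Tendsto (fun p : (Fin n → ℝ) × ℝ =>
        (f (zb + (Φ (wbar + p.2 • p.1) - Φ wbar)) - f zb
          - L (Φ (wbar + p.2 • p.1) - Φ wbar)) / p.2)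
        ((𝓝 v) ×ˢ (𝓝[>] 0)) (𝓝 0) := by
      rw [NormedAddCommGroup.tendsto_nhds_zero]
      intro ε hε
      have hc : (0:ℝ) < ‖Φ1 v‖ + 1 := by positivity
      have hε₁ : (0:ℝ) < ε / (2 * (‖Φ1 v‖ + 1)) := by positivity
      have hev1 := hd0.eventually (hiso.def hε₁)
      have hev2 : ∀ᶠ p in (𝓝 v) ×ˢ (𝓝[>] (0:ℝ)),
          ‖p.2⁻¹ • (Φ (wbar + p.2 • p.1) - Φ wbar)‖ < ‖Φ1 v‖ + 1 :=
        hdv.norm.eventually_lt_const (lt_add_one _)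
      filter_upwards [hτ, hev1, hev2] with p hp h1 h2
      have hnp : ‖p.2⁻¹ • (Φ (wbar + p.2 • p.1) - Φ wbar)‖
          = ‖Φ (wbar + p.2 • p.1) - Φ wbar‖ / p.2 := by
        rw [norm_smul, Real.norm_eq_abs, abs_inv, abs_of_pos hp, inv_mul_eq_div]
      rw [Real.norm_eq_abs, abs_div, abs_of_pos hp]
      rw [Real.norm_eq_abs] at h1
      calc |f (zb + (Φ (wbar + p.2 • p.1) - Φ wbar)) - f zb
            - L (Φ (wbar + p.2 • p.1) - Φ wbar)| / p.2
          ≤ (ε / (2 * (‖Φ1 v‖ + 1)) * ‖Φ (wbar + p.2 • p.1) - Φ wbar‖) / p.2 := by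
            gcongr
        _ = ε / (2 * (‖Φ1 v‖ + 1)) * ‖p.2⁻¹ • (Φ (wbar + p.2 • p.1) - Φ wbar)‖ := by
            rw [hnp]; ring
        _ ≤ ε / (2 * (‖Φ1 v‖ + 1)) * (‖Φ1 v‖ + 1) := by
            exact mul_le_mul_of_nonneg_left (le_of_lt h2) (le_of_lt hε₁)
        _ = ε / 2 := by field_simp
        _ < ε := by linarith
    have hcomb := hA.add hB
    rw [add_zero] at hcomb
    have hval : (∑ i, F zb i * Φ1 v i) = L (Φ1 v) := by
      rw [hLdef, gradCLM_apply]
    rw [SemidiffLim, hval]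
    refine Filter.Tendsto.congr' ?_ hcomb
    filter_upwards [hτ] with p hp
    have hz : zb + (Φ (wbar + p.2 • p.1) - Φ wbar) = Φ (wbar + p.2 • p.1) := by
      rw [hzb]; abel
    have hLs : L (p.2⁻¹ • (Φ (wbar + p.2 • p.1) - Φ wbar))
        = p.2⁻¹ * L (Φ (wbar + p.2 • p.1) - Φ wbar) := by
      rw [map_smul, smul_eq_mul]
    show L (p.2⁻¹ • (Φ (wbar + p.2 • p.1) - Φ wbar))
        + (f (zb + (Φ (wbar + p.2 • p.1) - Φ wbar)) - f zb
          - L (Φ (wbar + p.2 • p.1) - Φ wbar)) / p.2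
      = (f (Φ (wbar + p.2 • p.1)) - f zb) / p.2
    rw [hLs, hz]
    field_simp
    ring
  · -- second-order semidifferentiability
    intro v
    obtain ⟨hτ, hd0⟩ := hsetup v
    have hdv := hΦ1 v
    have hA2 : Tendsto (fun p : (Fin n → ℝ) × ℝ =>
        2 * (f (zb + (Φ (wbar + p.2 • p.1) - Φ wbar)) - f zb
          - L (Φ (wbar + p.2 • p.1) - Φ wbar)
          - (1/2) * q (Φ (wbar + p.2 • p.1) - Φ wbar)) / p.2 ^ 2)
        ((𝓝 v) ×ˢ (𝓝[>] 0)) (𝓝 0) := by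
      rw [NormedAddCommGroup.tendsto_nhds_zero]
      intro ε hε
      set M : ℝ := (∑ i, Φ1 v i ^ 2) + 1 with hM
      have hM0 : (0:ℝ) < M := by positivity
      have hε₁ : (0:ℝ) < ε / (4 * M) := by positivity
      obtain ⟨δ, hδ, hest⟩ := hEst _ hε₁
      have hev1 : ∀ᶠ p in (𝓝 v) ×ˢ (𝓝[>] (0:ℝ)),
          ‖Φ (wbar + p.2 • p.1) - Φ wbar‖ < δ := by
        have h := hd0.norm
        rw [norm_zero] at h
        exact h.eventually_lt_const hδ
      have hev2 : ∀ᶠ p in (𝓝 v) ×ˢ (𝓝[>] (0:ℝ)),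
          (∑ i, (p.2⁻¹ • (Φ (wbar + p.2 • p.1) - Φ wbar)) i ^ 2) < M :=
        ((continuous_sum_sq.tendsto _).comp hdv).eventually_lt_const
          (by rw [hM]; exact lt_add_one _)
      filter_upwards [hτ, hev1, hev2] with p hp h1 h2
      have hRb := hest _ h1
      have hs : (∑ i, (p.2⁻¹ • (Φ (wbar + p.2 • p.1) - Φ wbar)) i ^ 2)
          = (p.2⁻¹) ^ 2 * ∑ i, (Φ (wbar + p.2 • p.1) - Φ wbar) i ^ 2 :=
        sum_sq_smul _ _
      have hp2 : (0:ℝ) < p.2 ^ 2 := by positivity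
      have hsum0 : (0:ℝ) ≤ ∑ i, (Φ (wbar + p.2 • p.1) - Φ wbar) i ^ 2 :=
        Finset.sum_nonneg fun i _ => sq_nonneg _
      rw [Real.norm_eq_abs, abs_div, abs_of_pos hp2, abs_mul, abs_two]
      calc 2 * |f (zb + (Φ (wbar + p.2 • p.1) - Φ wbar)) - f zb
            - L (Φ (wbar + p.2 • p.1) - Φ wbar)
            - (1/2) * q (Φ (wbar + p.2 • p.1) - Φ wbar)| / p.2 ^ 2
          ≤ 2 * (ε / (4 * M) * ∑ i, (Φ (wbar + p.2 • p.1) - Φ wbar) i ^ 2) / p.2 ^ 2 := by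
            gcongr
        _ = 2 * (ε / (4 * M))
            * ((p.2⁻¹) ^ 2 * ∑ i, (Φ (wbar + p.2 • p.1) - Φ wbar) i ^ 2) := by
            rw [inv_pow]; field_simp
        _ = 2 * (ε / (4 * M))
            * (∑ i, (p.2⁻¹ • (Φ (wbar + p.2 • p.1) - Φ wbar)) i ^ 2) := by rw [hs]
        _ ≤ 2 * (ε / (4 * M)) * M := by
            exact mul_le_mul_of_nonneg_left (le_of_lt h2) (by positivity)
        _ = ε / 2 := by field_simp; ring
        _ < ε := by linarith
    have hB2 : Tendsto (fun p : (Fin n → ℝ) × ℝ =>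
        L ((2 / p.2 ^ 2) • (Φ (wbar + p.2 • p.1) - Φ wbar - p.2 • Φ1 p.1)))
        ((𝓝 v) ×ˢ (𝓝[>] 0)) (𝓝 (L (Φ2 v))) := (L.continuous.tendsto _).comp (hΦ2 v)
    have hC2 : Tendsto (fun p : (Fin n → ℝ) × ℝ =>
        q (p.2⁻¹ • (Φ (wbar + p.2 • p.1) - Φ wbar)))
        ((𝓝 v) ×ˢ (𝓝[>] 0)) (𝓝 (q (Φ1 v))) := (hqcont.tendsto _).comp hdv
    have hcomb := hA2.add (hC2.add hB2)
    rw [zero_add] at hcomb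
    have hval : (∑ i, Φ1 v i * F1 (Φ1 v) i) + ∑ i, F zb i * Φ2 v i
        = q (Φ1 v) + L (Φ2 v) := by
      rw [hLdef, gradCLM_apply, hqdef]
    rw [Semidiff2Lim, hval]
    refine Filter.Tendsto.congr' ?_ hcomb
    filter_upwards [hτ] with p hp
    have hz : zb + (Φ (wbar + p.2 • p.1) - Φ wbar) = Φ (wbar + p.2 • p.1) := by
      rw [hzb]; abel
    have hq1 : q (p.2⁻¹ • (Φ (wbar + p.2 • p.1) - Φ wbar))
        = (p.2⁻¹) ^ 2 * q (Φ (wbar + p.2 • p.1) - Φ wbar) :=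
      hqh _ (inv_pos.mpr hp) _
    have hL2 : L ((2 / p.2 ^ 2) • (Φ (wbar + p.2 • p.1) - Φ wbar - p.2 • Φ1 p.1))
        = (2 / p.2 ^ 2) * (L (Φ (wbar + p.2 • p.1) - Φ wbar) - p.2 * L (Φ1 p.1)) := by
      rw [map_smul, smul_eq_mul, map_sub, map_smul, smul_eq_mul]
    have hLv : (∑ i, F zb i * Φ1 p.1 i) = L (Φ1 p.1) := by
      rw [hLdef, gradCLM_apply]
    show 2 * (f (zb + (Φ (wbar + p.2 • p.1) - Φ wbar)) - f zb
          - L (Φ (wbar + p.2 • p.1) - Φ wbar)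
          - (1/2) * q (Φ (wbar + p.2 • p.1) - Φ wbar)) / p.2 ^ 2
        + (q (p.2⁻¹ • (Φ (wbar + p.2 • p.1) - Φ wbar))
          + L ((2 / p.2 ^ 2) • (Φ (wbar + p.2 • p.1) - Φ wbar - p.2 • Φ1 p.1)))
      = 2 * (f (Φ (wbar + p.2 • p.1)) - f zb - p.2 * ∑ i, F zb i * Φ1 p.1 i) / p.2 ^ 2
    rw [hq1, hL2, hz, hLv]
    have hpne : p.2 ≠ 0 := ne_of_gt hp
    field_simp
    ring
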